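/- Let 1 < p < ∞ and let h, g ∈ L¹(ℝ) ∩ L^p(ℝ). Then the function f on ℝ² defined by f(q,p) = h(q)g(p) (which lies in L¹(ℝ²) ∩ L^p(ℝ²)) has the property that the linear span of its translates is dense in L^p(ℝ²) if and only if the spans of the translates of h and of g are both dense in L^p(ℝ). -/

import Mathlib

open MeasureTheory
open scoped ENNReal

noncomputable section

/-- The linear span of the translates of a function on `ℝ`. -/
def spanTrans1 (f : ℝ → ℂ) : Set (ℝ → ℂ) :=
  ↑(Submodule.span ℂ {g : ℝ → ℂ | ∃ x : ℝ, g = fun y => f (y - x)})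

/-- The linear span of the translates of a function on `ℝ²`. -/
def spanTrans2 (f : ℝ × ℝ → ℂ) : Set (ℝ × ℝ → ℂ) :=
  ↑(Submodule.span ℂ {g : ℝ × ℝ → ℂ | ∃ x : ℝ × ℝ, g = fun y => f (y - x)})

/-- `f` is `p`-regular on `ℝ`: the span of its translates is dense in `L^p(ℝ)`. -/
def pReg1 (p : ℝ≥0∞) (f : ℝ → ℂ) : Prop :=
  ∀ g : ℝ → ℂ, MemLp g p volume → ∀ ε > (0:ℝ), ∃ h ∈ spanTrans1 f,
    eLpNorm (g - h) p volume < ENNReal.ofReal ε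

/-- `f` is `p`-regular on `ℝ²`: the span of its translates is dense in `L^p(ℝ²)`. -/
def pReg2 (p : ℝ≥0∞) (f : ℝ × ℝ → ℂ) : Prop :=
  ∀ g : ℝ × ℝ → ℂ, MemLp g p volume → ∀ ε > (0:ℝ), ∃ h ∈ spanTrans2 f,
    eLpNorm (g - h) p volume < ENNReal.ofReal ε

/-! ### Auxiliary lemmas -/

theorem spanTrans1_memℒp {pe : ℝ≥0∞} {h : ℝ → ℂ} (hh : MemLp h pe volume)
    {φ : ℝ → ℂ} (hφ : φ ∈ spanTrans1 h) : MemLp φ pe volume := by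
  induction hφ using Submodule.span_induction with
  | mem x hx => obtain ⟨x, rfl⟩ := hx
                exact hh.comp_measurePreserving (measurePreserving_sub_right volume x)
  | zero => exact MemLp.zero
  | add _ _ _ _ h1 h2 => exact h1.add h2
  | smul c _ _ h1 => exact h1.const_smul c

theorem spanTrans2_memℒp {pe : ℝ≥0∞} {f : ℝ × ℝ → ℂ} (hf : MemLp f pe volume)
    {T : ℝ × ℝ → ℂ} (hT : T ∈ spanTrans2 f) : MemLp T pe volume := by
  induction hT using Submodule.span_induction with
  | mem x hx => obtain ⟨x, rfl⟩ := hx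
                exact hf.comp_measurePreserving (measurePreserving_sub_right volume x)
  | zero => exact MemLp.zero
  | add _ _ _ _ h1 h2 => exact h1.add h2
  | smul c _ _ h1 => exact h1.const_smul c

theorem tensor_aesm {a b : ℝ → ℂ} (ha : AEStronglyMeasurable a (volume : Measure ℝ))
    (hb : AEStronglyMeasurable b (volume : Measure ℝ)) :
    AEStronglyMeasurable (fun z : ℝ × ℝ => a z.1 * b z.2) (volume : Measure (ℝ × ℝ)) := by
  rw [Measure.volume_eq_prod]
  exact ha.comp_fst.mul hb.comp_snd

theorem tensor_eLpNorm {p : ℝ} (hp : 0 < p) {a b : ℝ → ℂ}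
    (ha : AEStronglyMeasurable a (volume : Measure ℝ))
    (hb : AEStronglyMeasurable b (volume : Measure ℝ)) :
    eLpNorm (fun z : ℝ × ℝ => a z.1 * b z.2) (ENNReal.ofReal p) volume
      = eLpNorm a (ENNReal.ofReal p) volume * eLpNorm b (ENNReal.ofReal p) volume := by
  have hne : ENNReal.ofReal p ≠ 0 := by simp [ENNReal.ofReal_eq_zero, not_le, hp]
  have htop : ENNReal.ofReal p ≠ ∞ := ENNReal.ofReal_ne_top
  have htr : (ENNReal.ofReal p).toReal = p := ENNReal.toReal_ofReal hp.le
  rw [eLpNorm_eq_lintegral_rpow_enorm_toReal hne htop, eLpNorm_eq_lintegral_rpow_enorm_toReal hne htop,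
    eLpNorm_eq_lintegral_rpow_enorm_toReal hne htop, htr]
  simp only [enorm_eq_nnnorm]
  have key : ∫⁻ z : ℝ × ℝ, (‖a z.1 * b z.2‖₊ : ℝ≥0∞) ^ p ∂volume
      = (∫⁻ x, (‖a x‖₊ : ℝ≥0∞) ^ p ∂volume) * ∫⁻ y, (‖b y‖₊ : ℝ≥0∞) ^ p ∂volume := by
    rw [Measure.volume_eq_prod]
    have : ∀ z : ℝ × ℝ, (‖a z.1 * b z.2‖₊ : ℝ≥0∞) ^ p
        = ((‖a z.1‖₊ : ℝ≥0∞) ^ p) * ((‖b z.2‖₊ : ℝ≥0∞) ^ p) := by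
      intro z
      rw [nnnorm_mul, ENNReal.coe_mul, ENNReal.mul_rpow_of_nonneg _ _ hp.le]
    simp_rw [this]
    exact lintegral_prod_mul (ha.enorm.pow_const p) (hb.enorm.pow_const p)
  rw [key, ENNReal.mul_rpow_of_nonneg _ _ (by positivity : (0:ℝ) ≤ 1 / p)]

theorem tensor_memℒp {p : ℝ} (hp : 0 < p) {a b : ℝ → ℂ}
    (ha : MemLp a (ENNReal.ofReal p) volume) (hb : MemLp b (ENNReal.ofReal p) volume) :
    MemLp (fun z : ℝ × ℝ => a z.1 * b z.2) (ENNReal.ofReal p) volume := by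
  refine ⟨tensor_aesm ha.aestronglyMeasurable hb.aestronglyMeasurable, ?_⟩
  rw [tensor_eLpNorm hp ha.aestronglyMeasurable hb.aestronglyMeasurable]
  exact ENNReal.mul_lt_top ha.2 hb.2

theorem tensor_mem_spanTrans2 (h g : ℝ → ℂ) {φ ψ : ℝ → ℂ}
    (hφ : φ ∈ spanTrans1 h) (hψ : ψ ∈ spanTrans1 g) :
    (fun z : ℝ × ℝ => φ z.1 * ψ z.2) ∈ spanTrans2 (fun z : ℝ × ℝ => h z.1 * g z.2) := by
  induction hφ using Submodule.span_induction with
  | mem φ hx =>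
    obtain ⟨s, rfl⟩ := hx
    induction hψ using Submodule.span_induction with
    | mem ψ hy =>
      obtain ⟨t, rfl⟩ := hy
      exact Submodule.subset_span ⟨(s, t), rfl⟩
    | zero =>
      have : (fun z : ℝ × ℝ => (fun y => h (y - s)) z.1 * (0 : ℝ → ℂ) z.2)
          = (0 : ℝ × ℝ → ℂ) := by funext z; simp
      rw [this]; exact Submodule.zero_mem _
    | add ψ₁ ψ₂ _ _ h1 h2 =>
      have : (fun z : ℝ × ℝ => (fun y => h (y - s)) z.1 * (ψ₁ + ψ₂) z.2)
          = (fun z : ℝ × ℝ => (fun y => h (y - s)) z.1 * ψ₁ z.2)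
            + (fun z : ℝ × ℝ => (fun y => h (y - s)) z.1 * ψ₂ z.2) := by
        funext z; simp [mul_add]
      rw [this]; exact Submodule.add_mem _ h1 h2
    | smul c ψ₁ _ h1 =>
      have : (fun z : ℝ × ℝ => (fun y => h (y - s)) z.1 * (c • ψ₁) z.2)
          = c • (fun z : ℝ × ℝ => (fun y => h (y - s)) z.1 * ψ₁ z.2) := by
        funext z; simp [Pi.smul_apply, smul_eq_mul]; ring
      rw [this]; exact Submodule.smul_mem _ _ h1
  | zero =>
    have : (fun z : ℝ × ℝ => (0 : ℝ → ℂ) z.1 * ψ z.2) = (0 : ℝ × ℝ → ℂ) := by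
      funext z; simp
    rw [this]; exact Submodule.zero_mem _
  | add φ₁ φ₂ _ _ h1 h2 =>
    have : (fun z : ℝ × ℝ => (φ₁ + φ₂) z.1 * ψ z.2)
        = (fun z : ℝ × ℝ => φ₁ z.1 * ψ z.2) + (fun z : ℝ × ℝ => φ₂ z.1 * ψ z.2) := by
      funext z; simp [add_mul]
    rw [this]; exact Submodule.add_mem _ h1 h2
  | smul c φ₁ _ h1 =>
    have : (fun z : ℝ × ℝ => (c • φ₁) z.1 * ψ z.2)
        = c • (fun z : ℝ × ℝ => φ₁ z.1 * ψ z.2) := by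
      funext z; simp [Pi.smul_apply, smul_eq_mul]; ring
    rw [this]; exact Submodule.smul_mem _ _ h1

theorem norm_approx_le {pe : ℝ≥0∞} (hpe : 1 ≤ pe) {φ φ' : ℝ → ℂ}
    (hφ : MemLp φ pe volume) (hφ' : MemLp φ' pe volume) :
    eLpNorm φ' pe volume ≤ eLpNorm (φ - φ') pe volume + eLpNorm φ pe volume := by
  have : φ' = (φ' - φ) + φ := by ring
  calc eLpNorm φ' pe volume = eLpNorm ((φ' - φ) + φ) pe volume := by rw [← this]
    _ ≤ eLpNorm (φ' - φ) pe volume + eLpNorm φ pe volume :=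
        eLpNorm_add_le (hφ'.sub hφ).aestronglyMeasurable hφ.aestronglyMeasurable hpe
    _ = eLpNorm (φ - φ') pe volume + eLpNorm φ pe volume := by
        rw [show φ' - φ = -(φ - φ') by ring, eLpNorm_neg]

theorem approx_tensor {p : ℝ} (hp : 1 < p) {h g : ℝ → ℂ}
    (hhp : MemLp h (ENNReal.ofReal p) volume) (hgp : MemLp g (ENNReal.ofReal p) volume)
    (Hh : pReg1 (ENNReal.ofReal p) h) (Hg : pReg1 (ENNReal.ofReal p) g)
    {φ ψ : ℝ → ℂ} (hφ : MemLp φ (ENNReal.ofReal p) volume)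
    (hψ : MemLp ψ (ENNReal.ofReal p) volume) {ε : ℝ} (hε : 0 < ε) :
    ∃ T ∈ spanTrans2 (fun z : ℝ × ℝ => h z.1 * g z.2),
      eLpNorm ((fun z : ℝ × ℝ => φ z.1 * ψ z.2) - T) (ENNReal.ofReal p) volume
        < ENNReal.ofReal ε := by
  set pe := ENNReal.ofReal p with hpe_def
  have hp0 : (0:ℝ) < p := lt_trans one_pos hp
  have hpe1 : 1 ≤ pe := by
    rw [hpe_def, ← ENNReal.ofReal_one]
    exact ENNReal.ofReal_le_ofReal hp.le
  set Bφ : ℝ := (eLpNorm φ pe volume).toReal with hBφ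
  set Bψ : ℝ := (eLpNorm ψ pe volume).toReal with hBψ
  have hBφ0 : 0 ≤ Bφ := ENNReal.toReal_nonneg
  have hBψ0 : 0 ≤ Bψ := ENNReal.toReal_nonneg
  have hφfin : eLpNorm φ pe volume ≤ ENNReal.ofReal Bφ := by
    rw [hBφ, ENNReal.ofReal_toReal hφ.2.ne]
  have hψfin : eLpNorm ψ pe volume ≤ ENNReal.ofReal Bψ := by
    rw [hBψ, ENNReal.ofReal_toReal hψ.2.ne]
  have hε₁ : (0:ℝ) < min 1 (ε / (2 * (Bψ + 1))) := by positivity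
  obtain ⟨φ', hφ'mem, hφ'⟩ := Hh φ hφ _ hε₁
  have hφ'ℒp : MemLp φ' pe volume := spanTrans1_memℒp hhp hφ'mem
  have hε₂ : (0:ℝ) < ε / (2 * (Bφ + 2)) := by positivity
  obtain ⟨ψ', hψ'mem, hψ'⟩ := Hg ψ hψ _ hε₂
  have hψ'ℒp : MemLp ψ' pe volume := spanTrans1_memℒp hgp hψ'mem
  refine ⟨_, tensor_mem_spanTrans2 h g hφ'mem hψ'mem, ?_⟩
  have hdecomp : (fun z : ℝ × ℝ => φ z.1 * ψ z.2) - (fun z : ℝ × ℝ => φ' z.1 * ψ' z.2)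
      = (fun z : ℝ × ℝ => (φ - φ') z.1 * ψ z.2)
        + (fun z : ℝ × ℝ => φ' z.1 * (ψ - ψ') z.2) := by
    funext z; simp only [Pi.add_apply, Pi.sub_apply]; ring
  rw [hdecomp]
  have haesm1 : AEStronglyMeasurable (fun z : ℝ × ℝ => (φ - φ') z.1 * ψ z.2)
      (volume : Measure (ℝ × ℝ)) :=
    tensor_aesm (hφ.sub hφ'ℒp).aestronglyMeasurable hψ.aestronglyMeasurable
  have haesm2 : AEStronglyMeasurable (fun z : ℝ × ℝ => φ' z.1 * (ψ - ψ') z.2)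
      (volume : Measure (ℝ × ℝ)) :=
    tensor_aesm hφ'ℒp.aestronglyMeasurable (hψ.sub hψ'ℒp).aestronglyMeasurable
  calc eLpNorm _ pe volume ≤
      eLpNorm (fun z : ℝ × ℝ => (φ - φ') z.1 * ψ z.2) pe volume
        + eLpNorm (fun z : ℝ × ℝ => φ' z.1 * (ψ - ψ') z.2) pe volume :=
        eLpNorm_add_le haesm1 haesm2 hpe1
    _ = eLpNorm (φ - φ') pe volume * eLpNorm ψ pe volume
        + eLpNorm φ' pe volume * eLpNorm (ψ - ψ') pe volume := by
        rw [tensor_eLpNorm hp0 (hφ.sub hφ'ℒp).aestronglyMeasurable hψ.aestronglyMeasurable,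
          tensor_eLpNorm hp0 hφ'ℒp.aestronglyMeasurable (hψ.sub hψ'ℒp).aestronglyMeasurable]
    _ ≤ ENNReal.ofReal (min 1 (ε / (2 * (Bψ + 1)))) * ENNReal.ofReal Bψ
        + ENNReal.ofReal (Bφ + 1) * ENNReal.ofReal (ε / (2 * (Bφ + 2))) := by
        have b3 : eLpNorm φ' pe volume ≤ ENNReal.ofReal (Bφ + 1) := by
          calc eLpNorm φ' pe volume
              ≤ eLpNorm (φ - φ') pe volume + eLpNorm φ pe volume :=
                norm_approx_le hpe1 hφ hφ'ℒp
            _ ≤ ENNReal.ofReal (min 1 (ε / (2 * (Bψ + 1)))) + ENNReal.ofReal Bφ :=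
                add_le_add hφ'.le hφfin
            _ ≤ ENNReal.ofReal 1 + ENNReal.ofReal Bφ :=
                add_le_add (ENNReal.ofReal_le_ofReal (min_le_left _ _)) le_rfl
            _ = ENNReal.ofReal (Bφ + 1) := by
                rw [← ENNReal.ofReal_add (by norm_num) hBφ0]; ring_nf
        exact add_le_add (mul_le_mul' hφ'.le hψfin) (mul_le_mul' b3 hψ'.le)
    _ < ENNReal.ofReal ε := by
        rw [← ENNReal.ofReal_mul hε₁.le, ← ENNReal.ofReal_mul (by positivity : (0:ℝ) ≤ Bφ + 1),
          ← ENNReal.ofReal_add (by positivity) (by positivity)]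
        rw [ENNReal.ofReal_lt_ofReal_iff hε]
        have h1 : min 1 (ε / (2 * (Bψ + 1))) * Bψ < ε / 2 := by
          calc min 1 (ε / (2 * (Bψ + 1))) * Bψ ≤ (ε / (2 * (Bψ + 1))) * Bψ := by
                apply mul_le_mul_of_nonneg_right (min_le_right _ _) hBψ0
            _ < ε / 2 := by
                rw [div_mul_eq_mul_div, div_lt_div_iff₀ (by positivity) (by norm_num)]
                nlinarith
        have h2 : (Bφ + 1) * (ε / (2 * (Bφ + 2))) < ε / 2 := by
          rw [mul_div_assoc'] at *
          rw [div_lt_div_iff₀ (by positivity) (by norm_num)]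
          nlinarith
        linarith

/-! ### Grid approximation -/

def rectSet : Set (ℝ × ℝ → ℂ) :=
  {u | ∃ a b c d : ℝ, u = fun z : ℝ × ℝ =>
    (Set.Ico a b).indicator (fun _ => (1:ℂ)) z.1 *
    (Set.Ico c d).indicator (fun _ => (1:ℂ)) z.2}

theorem memℒp_Ico_indicator (pe : ℝ≥0∞) (a b : ℝ) :
    MemLp ((Set.Ico a b).indicator (fun _ => (1:ℂ))) pe volume := by
  apply memLp_indicator_const pe measurableSet_Ico
  right
  rw [Real.volume_Ico]
  exact ENNReal.ofReal_ne_top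

theorem memℒp_Icc_indicator (pe : ℝ≥0∞) (a b : ℝ) :
    MemLp ((Set.Icc a b).indicator (fun _ => (1:ℂ))) pe volume := by
  apply memLp_indicator_const pe measurableSet_Icc
  right
  rw [Real.volume_Icc]
  exact ENNReal.ofReal_ne_top

theorem eLpNorm_le_of_bound_support {p : ℝ} (hp : 0 < p) {D : ℝ × ℝ → ℂ} {ε₀ M : ℝ}
    (hbd : ∀ z, ‖D z‖ ≤ ε₀)
    (hsupp : ∀ z : ℝ × ℝ, (z.1 < -M ∨ M ≤ z.1 ∨ z.2 < -M ∨ M ≤ z.2) → D z = 0) :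
    eLpNorm D (ENNReal.ofReal p) volume
      ≤ ENNReal.ofReal ε₀ * (ENNReal.ofReal (2*M) * ENNReal.ofReal (2*M)) ^ (1/p) := by
  have hne : ENNReal.ofReal p ≠ 0 := by simp [ENNReal.ofReal_eq_zero, not_le, hp]
  have htop : ENNReal.ofReal p ≠ ∞ := ENNReal.ofReal_ne_top
  have htr : (ENNReal.ofReal p).toReal = p := ENNReal.toReal_ofReal hp.le
  rw [eLpNorm_eq_lintegral_rpow_enorm_toReal hne htop, htr]
  simp only [enorm_eq_nnnorm]
  set B : Set (ℝ × ℝ) := Set.Ico (-M) M ×ˢ Set.Ico (-M) M with hB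
  have hBmeas : MeasurableSet B := (measurableSet_Ico).prod (measurableSet_Ico)
  have hmono : ∀ z : ℝ × ℝ, (‖D z‖₊ : ℝ≥0∞) ^ p
      ≤ B.indicator (fun _ => ENNReal.ofReal ε₀ ^ p) z := by
    intro z
    by_cases hz : z ∈ B
    · rw [Set.indicator_of_mem hz]
      apply ENNReal.rpow_le_rpow _ hp.le
      rw [← enorm_eq_nnnorm, ← ofReal_norm]
      exact ENNReal.ofReal_le_ofReal (hbd z)
    · rw [Set.indicator_of_notMem hz]
      have : D z = 0 := by
        apply hsupp
        rw [hB, Set.mem_prod, not_and_or] at hz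
        rcases hz with h | h
        · rw [Set.mem_Ico, not_and_or, not_le, not_lt] at h
          rcases h with h | h
          · exact Or.inl h
          · exact Or.inr (Or.inl h)
        · rw [Set.mem_Ico, not_and_or, not_le, not_lt] at h
          rcases h with h | h
          · exact Or.inr (Or.inr (Or.inl h))
          · exact Or.inr (Or.inr (Or.inr h))
      rw [this]
      simp [ENNReal.zero_rpow_of_pos hp]
  calc (∫⁻ z, (‖D z‖₊ : ℝ≥0∞) ^ p ∂volume) ^ (1/p)
      ≤ (∫⁻ z, B.indicator (fun _ => ENNReal.ofReal ε₀ ^ p) z ∂volume) ^ (1/p) := by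
        apply ENNReal.rpow_le_rpow _ (by positivity)
        exact lintegral_mono hmono
    _ = (ENNReal.ofReal ε₀ ^ p * volume B) ^ (1/p) := by
        rw [lintegral_indicator hBmeas]
        simp [Measure.restrict_apply]
    _ = ENNReal.ofReal ε₀ * (ENNReal.ofReal (2*M) * ENNReal.ofReal (2*M)) ^ (1/p) := by
        have hvol : volume B = ENNReal.ofReal (2*M) * ENNReal.ofReal (2*M) := by
          rw [hB, Measure.volume_eq_prod, Measure.prod_prod, Real.volume_Ico]
          ring_nf
        rw [hvol, ENNReal.mul_rpow_of_nonneg _ _ (by positivity : (0:ℝ) ≤ 1/p),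
          ← ENNReal.rpow_mul, mul_one_div_cancel hp.ne', ENNReal.rpow_one]
/-- Pointwise grid approximation of a continuous compactly supported function. -/
theorem grid_approx {F : ℝ × ℝ → ℂ} (hFc : Continuous F) (hFs : HasCompactSupport F)
    {ε₀ : ℝ} (hε₀ : 0 < ε₀) {R : ℝ} (hR : 1 ≤ R)
    (hsupp : tsupport F ⊆ Metric.closedBall 0 R) :
    ∃ S : ℝ × ℝ → ℂ, S ∈ Submodule.span ℂ rectSet ∧
      (∀ z, ‖F z - S z‖ ≤ ε₀) ∧
      (∀ z : ℝ × ℝ, (z.1 < -(R+2) ∨ R+2 ≤ z.1 ∨ z.2 < -(R+2) ∨ R+2 ≤ z.2) → F z - S z = 0) := by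
  -- uniform continuity
  obtain ⟨δ, hδ, hδ'⟩ := Metric.uniformContinuous_iff.mp
    (hFs.uniformContinuous_of_continuous hFc) ε₀ hε₀
  -- mesh size
  set s : ℝ := min (1:ℝ) (δ/2) with hs_def
  have hs : 0 < s := lt_min one_pos (by linarith)
  have hs1 : s ≤ 1 := min_le_left _ _
  have hsδ : s < δ := lt_of_le_of_lt (min_le_right _ _) (by linarith)
  set n : ℕ := ⌈(R+1)/s⌉₊ with hn_def
  have hns_lb : R + 1 ≤ (n:ℝ) * s := by
    rw [hn_def]
    have := Nat.le_ceil ((R+1)/s)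
    calc R + 1 = ((R+1)/s) * s := by field_simp
      _ ≤ (⌈(R+1)/s⌉₊ : ℝ) * s := by gcongr
  have hns_ub : (n:ℝ) * s ≤ R + 2 := by
    have h1 : (⌈(R+1)/s⌉₊ : ℝ) < (R+1)/s + 1 := Nat.ceil_lt_add_one (by positivity)
    have : (n:ℝ) * s < ((R+1)/s + 1) * s := by rw [hn_def]; exact mul_lt_mul_of_pos_right h1 hs
    have h2 : ((R+1)/s + 1) * s = R + 1 + s := by field_simp
    nlinarith
  -- the indicator functions
  set indF : ℤ → ℝ → ℂ := fun i x =>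
    (Set.Ico ((i:ℝ)*s) (((i:ℝ)+1)*s)).indicator (fun _ => (1:ℂ)) x with hindF
  set Q : Finset (ℤ × ℤ) := Finset.Ico (-(n:ℤ)) n ×ˢ Finset.Ico (-(n:ℤ)) n with hQ
  set S : ℝ × ℝ → ℂ :=
    ∑ q ∈ Q, F ((q.1:ℝ)*s, (q.2:ℝ)*s) • (fun z : ℝ × ℝ => indF q.1 z.1 * indF q.2 z.2)
    with hS
  have hSmem : S ∈ Submodule.span ℂ rectSet := by
    refine Submodule.sum_mem _ fun q _ => Submodule.smul_mem _ _ (Submodule.subset_span ?_)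
    exact ⟨(q.1:ℝ)*s, ((q.1:ℝ)+1)*s, (q.2:ℝ)*s, ((q.2:ℝ)+1)*s, rfl⟩
  have hSz : ∀ z : ℝ × ℝ, S z = ∑ q ∈ Q, F ((q.1:ℝ)*s, (q.2:ℝ)*s) * (indF q.1 z.1 * indF q.2 z.2) := by
    intro z
    rw [hS]
    simp [Finset.sum_apply, Pi.smul_apply, smul_eq_mul]
  -- membership characterization of indicators
  have hind_mem : ∀ (i : ℤ) (x : ℝ), x ∈ Set.Ico ((i:ℝ)*s) (((i:ℝ)+1)*s) ↔ i = ⌊x/s⌋ := by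
    intro i x
    rw [Set.mem_Ico]
    constructor
    · rintro ⟨h1, h2⟩
      symm
      rw [Int.floor_eq_iff]
      constructor
      · exact (le_div_iff₀ hs).2 (by linarith)
      · exact (div_lt_iff₀ hs).2 (by push_cast; linarith)
    · rintro rfl
      have h1 : (⌊x/s⌋:ℝ) ≤ x/s := Int.floor_le _
      have h2 : x/s < (⌊x/s⌋:ℝ)+1 := Int.lt_floor_add_one _
      have h3 : (⌊x/s⌋:ℝ) * s ≤ (x/s) * s := mul_le_mul_of_nonneg_right h1 hs.le
      have h4 : (x/s) * s < ((⌊x/s⌋:ℝ)+1) * s := mul_lt_mul_of_pos_right h2 hs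
      have h5 : (x/s) * s = x := by field_simp
      constructor
      · linarith
      · linarith
  -- F vanishes far away
  have hFzero : ∀ z : ℝ × ℝ, (R < |z.1| ∨ R < |z.2|) → F z = 0 := by
    intro z hz
    apply image_eq_zero_of_notMem_tsupport
    intro hmem
    have := hsupp hmem
    rw [Metric.mem_closedBall, dist_zero_right, Prod.norm_def] at this
    rcases hz with h | h
    · exact absurd (le_trans (le_max_left _ _) this) (not_le.2 (by simpa using h))
    · exact absurd (le_trans (le_max_right _ _) this) (not_le.2 (by simpa using h))
  have hSzero_x : ∀ x y : ℝ, x ∉ Set.Ico (-((n:ℝ)*s)) ((n:ℝ)*s) → S (x, y) = 0 := by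
    intro x y hx
    rw [hSz]
    apply Finset.sum_eq_zero
    rintro ⟨i, j⟩ hq
    rw [Finset.mem_product, Finset.mem_Ico, Finset.mem_Ico] at hq
    have hnx : ¬(x ∈ Set.Ico ((i:ℝ)*s) (((i:ℝ)+1)*s)) := by
      intro hmem
      apply hx
      obtain ⟨h1, h2⟩ := hmem
      obtain ⟨⟨hi1, hi2⟩, _⟩ := hq
      constructor
      · have : (-(n:ℤ):ℝ) ≤ (i:ℝ) := by exact_mod_cast hi1
        push_cast at this
        nlinarith
      · have : ((i:ℝ)+1) ≤ (n:ℝ) := by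
          have : (i:ℤ)+1 ≤ (n:ℤ) := hi2
          exact_mod_cast this
        nlinarith
    rw [hindF]; simp only []
    rw [Set.indicator_of_notMem hnx]; ring
  have hSzero_y : ∀ x y : ℝ, y ∉ Set.Ico (-((n:ℝ)*s)) ((n:ℝ)*s) → S (x, y) = 0 := by
    intro x y hy
    rw [hSz]
    apply Finset.sum_eq_zero
    rintro ⟨i, j⟩ hq
    rw [Finset.mem_product, Finset.mem_Ico, Finset.mem_Ico] at hq
    have hny : ¬(y ∈ Set.Ico ((j:ℝ)*s) (((j:ℝ)+1)*s)) := by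
      intro hmem
      apply hy
      obtain ⟨h1, h2⟩ := hmem
      obtain ⟨_, ⟨hj1, hj2⟩⟩ := hq
      constructor
      · have : (-(n:ℤ):ℝ) ≤ (j:ℝ) := by exact_mod_cast hj1
        push_cast at this
        nlinarith
      · have : ((j:ℝ)+1) ≤ (n:ℝ) := by
          have : (j:ℤ)+1 ≤ (n:ℤ) := hj2
          exact_mod_cast this
        nlinarith
    rw [hindF]; simp only []
    rw [Set.indicator_of_notMem hny]; ring
  have hFzero_x : ∀ x y : ℝ, x ∉ Set.Ico (-((n:ℝ)*s)) ((n:ℝ)*s) → F (x, y) = 0 := by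
    intro x y hx
    apply hFzero
    left
    rw [Set.mem_Ico, not_and_or, not_le, not_lt] at hx
    rcases hx with hc | hc
    · rw [abs_of_nonpos (by nlinarith)]; nlinarith
    · rw [abs_of_nonneg (by nlinarith)]; nlinarith
  have hFzero_y : ∀ x y : ℝ, y ∉ Set.Ico (-((n:ℝ)*s)) ((n:ℝ)*s) → F (x, y) = 0 := by
    intro x y hy
    apply hFzero
    right
    rw [Set.mem_Ico, not_and_or, not_le, not_lt] at hy
    rcases hy with hc | hc
    · rw [abs_of_nonpos (by nlinarith)]; nlinarith
    · rw [abs_of_nonneg (by nlinarith)]; nlinarith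
  refine ⟨S, hSmem, ?_, ?_⟩
  · -- pointwise bound
    intro z
    obtain ⟨x, y⟩ := z
    by_cases hx : x ∈ Set.Ico (-((n:ℝ)*s)) ((n:ℝ)*s)
    · by_cases hy : y ∈ Set.Ico (-((n:ℝ)*s)) ((n:ℝ)*s)
      · -- inner case
        obtain ⟨hx1, hx2⟩ := hx
        obtain ⟨hy1, hy2⟩ := hy
        set i0 : ℤ := ⌊x/s⌋ with hi0
        set j0 : ℤ := ⌊y/s⌋ with hj0
        have hi0mem : i0 ∈ Finset.Ico (-(n:ℤ)) (n:ℤ) := by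
          rw [Finset.mem_Ico]
          constructor
          · rw [hi0, Int.le_floor]
            push_cast
            rw [le_div_iff₀ hs]
            linarith
          · rw [hi0, Int.floor_lt]
            push_cast
            rw [div_lt_iff₀ hs]
            linarith
        have hj0mem : j0 ∈ Finset.Ico (-(n:ℤ)) (n:ℤ) := by
          rw [Finset.mem_Ico]
          constructor
          · rw [hj0, Int.le_floor]
            push_cast
            rw [le_div_iff₀ hs]
            linarith
          · rw [hj0, Int.floor_lt]
            push_cast
            rw [div_lt_iff₀ hs]
            linarith
        have hSval : S (x, y) = F ((i0:ℝ)*s, (j0:ℝ)*s) := by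
          rw [hSz]
          rw [Finset.sum_eq_single_of_mem (i0, j0) (Finset.mem_product.2 ⟨hi0mem, hj0mem⟩)]
          · have hxi : x ∈ Set.Ico ((i0:ℝ)*s) (((i0:ℝ)+1)*s) := (hind_mem i0 x).2 hi0
            have hyj : y ∈ Set.Ico ((j0:ℝ)*s) (((j0:ℝ)+1)*s) := (hind_mem j0 y).2 hj0
            rw [hindF]
            simp only []
            rw [Set.indicator_of_mem hxi, Set.indicator_of_mem hyj]
            ring
          · rintro ⟨i, j⟩ _ hne
            have : ¬(x ∈ Set.Ico ((i:ℝ)*s) (((i:ℝ)+1)*s)) ∨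
                ¬(y ∈ Set.Ico ((j:ℝ)*s) (((j:ℝ)+1)*s)) := by
              by_contra hcon
              push_neg at hcon
              obtain ⟨h1, h2⟩ := hcon
              exact hne (Prod.ext ((hind_mem i x).1 h1) ((hind_mem j y).1 h2))
            rcases this with hni | hnj
            · rw [hindF]; simp only []
              rw [Set.indicator_of_notMem hni]; ring
            · rw [hindF]; simp only []
              rw [Set.indicator_of_notMem hnj]; ring
        rw [hSval]
        have hdist : dist (x, y) (((i0:ℝ)*s, (j0:ℝ)*s) : ℝ × ℝ) < δ := by
          rw [Prod.dist_eq]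
          have hxi : x ∈ Set.Ico ((i0:ℝ)*s) (((i0:ℝ)+1)*s) := (hind_mem i0 x).2 hi0
          have hyj : y ∈ Set.Ico ((j0:ℝ)*s) (((j0:ℝ)+1)*s) := (hind_mem j0 y).2 hj0
          obtain ⟨ha1, ha2⟩ := hxi
          obtain ⟨hb1, hb2⟩ := hyj
          apply max_lt
          · show dist x ((i0:ℝ)*s) < δ
            rw [Real.dist_eq, abs_of_nonneg (by linarith)]
            push_cast at ha2 ⊢
            linarith [hsδ]
          · show dist y ((j0:ℝ)*s) < δ
            rw [Real.dist_eq, abs_of_nonneg (by linarith)]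
            push_cast at hb2 ⊢
            linarith [hsδ]
        have := hδ' hdist
        rw [dist_eq_norm] at this
        exact this.le
      · -- y outside
        rw [hSzero_y x y hy, hFzero_y x y hy]
        simpa using hε₀.le
    · -- x outside
      rw [hSzero_x x y hx, hFzero_x x y hx]
      simpa using hε₀.le
  · -- support
    intro z hz
    obtain ⟨x, y⟩ := z
    have hout : (x ∉ Set.Ico (-((n:ℝ)*s)) ((n:ℝ)*s)) ∨ (y ∉ Set.Ico (-((n:ℝ)*s)) ((n:ℝ)*s)) := by
      rcases hz with h | h | h | h
      · left; rw [Set.mem_Ico]; push_neg; intro hc; exfalso; simp only at h; nlinarith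
      · left; rw [Set.mem_Ico]; push_neg; intro hc; simp only at h; nlinarith
      · right; rw [Set.mem_Ico]; push_neg; intro hc; exfalso; simp only at h; nlinarith
      · right; rw [Set.mem_Ico]; push_neg; intro hc; simp only at h; nlinarith
    rcases hout with hx | hy
    · rw [hSzero_x x y hx, hFzero_x x y hx]; ring
    · rw [hSzero_y x y hy, hFzero_y x y hy]; ring

/-! ### Backward direction -/

theorem approx_rect_span {p : ℝ} (hp : 1 < p) {h g : ℝ → ℂ}
    (hhp : MemLp h (ENNReal.ofReal p) volume) (hgp : MemLp g (ENNReal.ofReal p) volume)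
    (Hh : pReg1 (ENNReal.ofReal p) h) (Hg : pReg1 (ENNReal.ofReal p) g)
    {S : ℝ × ℝ → ℂ} (hS : S ∈ Submodule.span ℂ rectSet) :
    MemLp S (ENNReal.ofReal p) volume ∧
    ∀ ε > (0:ℝ), ∃ T ∈ spanTrans2 (fun z : ℝ × ℝ => h z.1 * g z.2),
      eLpNorm (S - T) (ENNReal.ofReal p) volume < ENNReal.ofReal ε := by
  set pe := ENNReal.ofReal p with hpe_def
  have hp0 : (0:ℝ) < p := lt_trans one_pos hp
  have hpe1 : 1 ≤ pe := by
    rw [hpe_def, ← ENNReal.ofReal_one]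
    exact ENNReal.ofReal_le_ofReal hp.le
  have hfmem : MemLp (fun z : ℝ × ℝ => h z.1 * g z.2) pe volume := tensor_memℒp hp0 hhp hgp
  induction hS using Submodule.span_induction with
  | mem u hu =>
    obtain ⟨a, b, c, d, rfl⟩ := hu
    constructor
    · exact tensor_memℒp hp0 (memℒp_Ico_indicator pe a b) (memℒp_Ico_indicator pe c d)
    · intro ε hε
      exact approx_tensor hp hhp hgp Hh Hg (memℒp_Ico_indicator pe a b)
        (memℒp_Ico_indicator pe c d) hε
  | zero =>
    refine ⟨MemLp.zero, fun ε hε => ⟨0, Submodule.zero_mem _, ?_⟩⟩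
    simp only [sub_zero, eLpNorm_zero]
    exact ENNReal.ofReal_pos.2 hε
  | add S₁ S₂ _ _ ih1 ih2 =>
    obtain ⟨hm1, ha1⟩ := ih1
    obtain ⟨hm2, ha2⟩ := ih2
    refine ⟨hm1.add hm2, fun ε hε => ?_⟩
    obtain ⟨T₁, hT₁mem, hT₁⟩ := ha1 (ε/2) (by linarith)
    obtain ⟨T₂, hT₂mem, hT₂⟩ := ha2 (ε/2) (by linarith)
    have hT₁ℒp : MemLp T₁ pe volume := spanTrans2_memℒp hfmem hT₁mem
    have hT₂ℒp : MemLp T₂ pe volume := spanTrans2_memℒp hfmem hT₂mem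
    refine ⟨T₁ + T₂, Submodule.add_mem _ hT₁mem hT₂mem, ?_⟩
    have hdecomp : (S₁ + S₂) - (T₁ + T₂) = (S₁ - T₁) + (S₂ - T₂) := by ring
    rw [hdecomp]
    calc eLpNorm ((S₁ - T₁) + (S₂ - T₂)) pe volume
        ≤ eLpNorm (S₁ - T₁) pe volume + eLpNorm (S₂ - T₂) pe volume :=
          eLpNorm_add_le (hm1.sub hT₁ℒp).aestronglyMeasurable
            (hm2.sub hT₂ℒp).aestronglyMeasurable hpe1
      _ < ENNReal.ofReal (ε/2) + ENNReal.ofReal (ε/2) := ENNReal.add_lt_add hT₁ hT₂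
      _ = ENNReal.ofReal ε := by
          rw [← ENNReal.ofReal_add (by linarith) (by linarith)]
          ring_nf
  | smul c S₁ _ ih1 =>
    obtain ⟨hm1, ha1⟩ := ih1
    refine ⟨hm1.const_smul c, fun ε hε => ?_⟩
    by_cases hc : c = 0
    · refine ⟨0, Submodule.zero_mem _, ?_⟩
      subst hc
      have : (0:ℂ) • S₁ - 0 = (0 : ℝ × ℝ → ℂ) := by simp
      rw [this, eLpNorm_zero]
      exact ENNReal.ofReal_pos.2 hε
    · have hc0 : (0:ℝ) < ‖c‖ := norm_pos_iff.2 hc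
      obtain ⟨T₁, hT₁mem, hT₁⟩ := ha1 (ε / (‖c‖ + 1)) (by positivity)
      refine ⟨c • T₁, Submodule.smul_mem _ _ hT₁mem, ?_⟩
      have hdecomp : c • S₁ - c • T₁ = c • (S₁ - T₁) := by
        rw [smul_sub]
      rw [hdecomp, eLpNorm_const_smul]
      calc (‖c‖₊ : ℝ≥0∞) • eLpNorm (S₁ - T₁) pe volume
          = (‖c‖₊ : ℝ≥0∞) * eLpNorm (S₁ - T₁) pe volume := rfl
        _ < (‖c‖₊ : ℝ≥0∞) * ENNReal.ofReal (ε / (‖c‖ + 1)) := by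
            apply ENNReal.mul_lt_mul_right ?_ ?_ hT₁
            · simpa using hc
            · exact ENNReal.coe_ne_top
        _ = ENNReal.ofReal (‖c‖ * (ε / (‖c‖ + 1))) := by
            rw [ENNReal.ofReal_mul hc0.le, ofReal_norm, enorm_eq_nnnorm]
        _ < ENNReal.ofReal ε := by
            rw [ENNReal.ofReal_lt_ofReal_iff hε, mul_div_assoc']
            rw [div_lt_iff₀ (by positivity)]
            nlinarith

theorem backward_pReg2 {p : ℝ} (hp : 1 < p) {h g : ℝ → ℂ}
    (hhp : MemLp h (ENNReal.ofReal p) volume) (hgp : MemLp g (ENNReal.ofReal p) volume)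
    (Hh : pReg1 (ENNReal.ofReal p) h) (Hg : pReg1 (ENNReal.ofReal p) g) :
    pReg2 (ENNReal.ofReal p) (fun z : ℝ × ℝ => h z.1 * g z.2) := by
  set pe := ENNReal.ofReal p with hpe_def
  have hp0 : (0:ℝ) < p := lt_trans one_pos hp
  have hpe1 : 1 ≤ pe := by
    rw [hpe_def, ← ENNReal.ofReal_one]
    exact ENNReal.ofReal_le_ofReal hp.le
  have hfmem : MemLp (fun z : ℝ × ℝ => h z.1 * g z.2) pe volume := tensor_memℒp hp0 hhp hgp
  intro G hG ε hε
  -- step 1 : continuous compactly supported approximation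
  have hε3 : (0:ℝ) < ε/3 := by linarith
  obtain ⟨F, hFs, hGF, hFc, hFmem⟩ := hG.exists_hasCompactSupport_eLpNorm_sub_le
    ENNReal.ofReal_ne_top (ε := ENNReal.ofReal (ε/3))
    (by simpa using (ENNReal.ofReal_pos.2 hε3).ne')
  -- step 2 : radius of support
  obtain ⟨r, hr⟩ := hFs.isBounded.subset_closedBall 0
  set R : ℝ := max r 1 with hR_def
  have hR : 1 ≤ R := le_max_right _ _
  have hsuppR : tsupport F ⊆ Metric.closedBall 0 R :=
    hr.trans (Metric.closedBall_subset_closedBall (le_max_left _ _))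
  -- step 3 : grid approximation
  set C : ℝ≥0∞ := (ENNReal.ofReal (2*(R+2)) * ENNReal.ofReal (2*(R+2))) ^ (1/p) with hC_def
  have hCfin : C ≠ ∞ := by
    apply ENNReal.rpow_ne_top_of_nonneg (by positivity)
    exact (ENNReal.mul_lt_top ENNReal.ofReal_lt_top ENNReal.ofReal_lt_top).ne
  set ε₀ : ℝ := (ε/3) / (C.toReal + 1) with hε₀_def
  have hε₀pos : 0 < ε₀ := by
    rw [hε₀_def]
    have : 0 ≤ C.toReal := ENNReal.toReal_nonneg
    positivity
  obtain ⟨S, hSspan, hSbd, hSsupp⟩ := grid_approx hFc hFs hε₀pos hR hsuppR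
  have hFS : eLpNorm (F - S) pe volume < ENNReal.ofReal (ε/3) := by
    have hbd : ∀ z, ‖(F - S) z‖ ≤ ε₀ := fun z => hSbd z
    have hs0 : ∀ z : ℝ × ℝ, (z.1 < -(R+2) ∨ (R+2) ≤ z.1 ∨ z.2 < -(R+2) ∨ (R+2) ≤ z.2) →
        (F - S) z = 0 := fun z hz => hSsupp z hz
    calc eLpNorm (F - S) pe volume ≤ ENNReal.ofReal ε₀ * C :=
          eLpNorm_le_of_bound_support hp0 hbd hs0
      _ ≤ ENNReal.ofReal ε₀ * ENNReal.ofReal C.toReal := by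
          rw [ENNReal.ofReal_toReal hCfin]
      _ = ENNReal.ofReal (ε₀ * C.toReal) := by
          rw [ENNReal.ofReal_mul hε₀pos.le]
      _ < ENNReal.ofReal (ε/3) := by
          rw [ENNReal.ofReal_lt_ofReal_iff hε3, hε₀_def]
          have h0 : 0 ≤ C.toReal := ENNReal.toReal_nonneg
          rw [div_mul_eq_mul_div, div_lt_iff₀ (by positivity)]
          nlinarith
  -- step 4 : approximate S
  obtain ⟨hSmem, hSapp⟩ := approx_rect_span hp hhp hgp Hh Hg hSspan
  obtain ⟨T, hTmem, hST⟩ := hSapp (ε/3) hε3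
  have hTℒp : MemLp T pe volume := spanTrans2_memℒp hfmem hTmem
  refine ⟨T, hTmem, ?_⟩
  have hdecomp : G - T = (G - F) + ((F - S) + (S - T)) := by ring
  rw [hdecomp]
  calc eLpNorm ((G - F) + ((F - S) + (S - T))) pe volume
      ≤ eLpNorm (G - F) pe volume + eLpNorm ((F - S) + (S - T)) pe volume :=
        eLpNorm_add_le (hG.sub hFmem).aestronglyMeasurable
          (((hFmem.sub hSmem).add (hSmem.sub hTℒp))).aestronglyMeasurable hpe1
    _ ≤ eLpNorm (G - F) pe volume +
        (eLpNorm (F - S) pe volume + eLpNorm (S - T) pe volume) := by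
        gcongr
        exact eLpNorm_add_le (hFmem.sub hSmem).aestronglyMeasurable
          (hSmem.sub hTℒp).aestronglyMeasurable hpe1
    _ < ENNReal.ofReal (ε/3) + (ENNReal.ofReal (ε/3) + ENNReal.ofReal (ε/3)) :=
        ENNReal.add_lt_add_of_le_of_lt (ne_top_of_le_ne_top ENNReal.ofReal_ne_top hGF)
          hGF (ENNReal.add_lt_add hFS hST)
    _ = ENNReal.ofReal ε := by
        rw [← ENNReal.ofReal_add (by linarith) (by linarith),
          ← ENNReal.ofReal_add (by linarith) (by linarith)]
        ring_nf
theorem section_estimate {α β : Type*} [MeasurableSpace α] [MeasurableSpace β]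
    (μ : Measure α) (ν : Measure β) [SFinite μ] [SFinite ν] {p q : ℝ}
    (hpq : p.HolderConjugate q) {D : α × β → ℂ}
    (hD : AEStronglyMeasurable D (μ.prod ν)) {θ : β → ℂ}
    (hθ : MemLp θ (ENNReal.ofReal q) ν) :
    eLpNorm (fun x => ∫ y, D (x, y) * θ y ∂ν) (ENNReal.ofReal p) μ
      ≤ eLpNorm D (ENNReal.ofReal p) (μ.prod ν) * eLpNorm θ (ENNReal.ofReal q) ν := by
  have hp0 : 0 < p := hpq.pos
  have hq0 : 0 < q := hpq.symm.pos
  have hpne : ENNReal.ofReal p ≠ 0 := by simp [ENNReal.ofReal_eq_zero, not_le, hp0]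
  have hqne : ENNReal.ofReal q ≠ 0 := by simp [ENNReal.ofReal_eq_zero, not_le, hq0]
  have hptr : (ENNReal.ofReal p).toReal = p := ENNReal.toReal_ofReal hp0.le
  have hqtr : (ENNReal.ofReal q).toReal = q := ENNReal.toReal_ofReal hq0.le
  rw [eLpNorm_eq_lintegral_rpow_enorm_toReal hpne ENNReal.ofReal_ne_top,
    eLpNorm_eq_lintegral_rpow_enorm_toReal hpne ENNReal.ofReal_ne_top,
    eLpNorm_eq_lintegral_rpow_enorm_toReal hqne ENNReal.ofReal_ne_top, hptr, hqtr]
  simp only [enorm_eq_nnnorm]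
  set Kq : ℝ≥0∞ := (∫⁻ y, (‖θ y‖₊ : ℝ≥0∞) ^ q ∂ν) ^ (1/q) with hKq
  have hKqfin : Kq ≠ ∞ := by
    have h2 := hθ.2
    rw [eLpNorm_eq_lintegral_rpow_enorm_toReal hqne ENNReal.ofReal_ne_top, hqtr] at h2
    exact h2.ne
  have hKqpfin : Kq ^ p ≠ ∞ := ENNReal.rpow_ne_top_of_nonneg hp0.le hKqfin
  -- a.e. pointwise bound
  have hae : ∀ᵐ x ∂μ, (‖∫ y, D (x, y) * θ y ∂ν‖₊ : ℝ≥0∞) ^ p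
      ≤ (∫⁻ y, (‖D (x, y)‖₊ : ℝ≥0∞) ^ p ∂ν) * Kq ^ p := by
    filter_upwards [hD.prodMk_left] with x hx
    have step1 : (‖∫ y, D (x, y) * θ y ∂ν‖₊ : ℝ≥0∞)
        ≤ ∫⁻ y, (‖D (x, y)‖₊ : ℝ≥0∞) * (‖θ y‖₊ : ℝ≥0∞) ∂ν := by
      calc (‖∫ y, D (x, y) * θ y ∂ν‖₊ : ℝ≥0∞)
          ≤ ∫⁻ y, (‖D (x, y) * θ y‖₊ : ℝ≥0∞) ∂ν := enorm_integral_le_lintegral_enorm _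
        _ = ∫⁻ y, (‖D (x, y)‖₊ : ℝ≥0∞) * (‖θ y‖₊ : ℝ≥0∞) ∂ν := by
            simp_rw [nnnorm_mul, ENNReal.coe_mul]
    have step2 : ∫⁻ y, (‖D (x, y)‖₊ : ℝ≥0∞) * (‖θ y‖₊ : ℝ≥0∞) ∂ν
        ≤ (∫⁻ y, (‖D (x, y)‖₊ : ℝ≥0∞) ^ p ∂ν) ^ (1/p) * Kq := by
      rw [hKq]
      exact ENNReal.lintegral_mul_le_Lp_mul_Lq ν hpq hx.enorm hθ.aestronglyMeasurable.enorm
    calc (‖∫ y, D (x, y) * θ y ∂ν‖₊ : ℝ≥0∞) ^ p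
        ≤ ((∫⁻ y, (‖D (x, y)‖₊ : ℝ≥0∞) ^ p ∂ν) ^ (1/p) * Kq) ^ p :=
          ENNReal.rpow_le_rpow (step1.trans step2) hp0.le
      _ = (∫⁻ y, (‖D (x, y)‖₊ : ℝ≥0∞) ^ p ∂ν) * Kq ^ p := by
          rw [ENNReal.mul_rpow_of_nonneg _ _ hp0.le, ← ENNReal.rpow_mul,
            one_div_mul_cancel hp0.ne', ENNReal.rpow_one]
  calc (∫⁻ x, (‖∫ y, D (x, y) * θ y ∂ν‖₊ : ℝ≥0∞) ^ p ∂μ) ^ (1/p)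
      ≤ (∫⁻ x, (∫⁻ y, (‖D (x, y)‖₊ : ℝ≥0∞) ^ p ∂ν) * Kq ^ p ∂μ) ^ (1/p) :=
        ENNReal.rpow_le_rpow (lintegral_mono_ae hae) (by positivity)
    _ = ((∫⁻ x, ∫⁻ y, (‖D (x, y)‖₊ : ℝ≥0∞) ^ p ∂ν ∂μ) * Kq ^ p) ^ (1/p) := by
        rw [lintegral_mul_const' _ _ hKqpfin]
    _ = ((∫⁻ z, (‖D z‖₊ : ℝ≥0∞) ^ p ∂(μ.prod ν)) * Kq ^ p) ^ (1/p) := by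
        rw [lintegral_prod (fun z => (‖D z‖₊ : ℝ≥0∞) ^ p) (hD.enorm.pow_const p)]
    _ = (∫⁻ z, (‖D z‖₊ : ℝ≥0∞) ^ p ∂(μ.prod ν)) ^ (1/p) * Kq := by
        rw [ENNReal.mul_rpow_of_nonneg _ _ (by positivity), ← ENNReal.rpow_mul,
          mul_one_div_cancel hp0.ne', ENNReal.rpow_one]
def theta : ℝ → ℂ := (Set.Icc (0:ℝ) 1).indicator (fun _ => (1:ℂ))

theorem theta_bdd : ∀ y, ‖theta y‖ ≤ 1 := by
  intro y
  rw [theta]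
  by_cases hy : y ∈ Set.Icc (0:ℝ) 1
  · rw [Set.indicator_of_mem hy]; simp
  · rw [Set.indicator_of_notMem hy]; simp

theorem theta_aesm : AEStronglyMeasurable theta (volume : Measure ℝ) :=
  (measurable_const.indicator measurableSet_Icc).aestronglyMeasurable

theorem theta_int : Integrable theta volume := by
  apply memLp_one_iff_integrable.mp
  apply memLp_indicator_const 1 measurableSet_Icc
  right
  rw [Real.volume_Icc]
  exact ENNReal.ofReal_ne_top

/-- integrating the second variable of a span element against theta -/
theorem span2_integral_mem (h g : ℝ → ℂ) (hg1 : Integrable g volume)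
    {T : ℝ × ℝ → ℂ} (hT : T ∈ spanTrans2 (fun z : ℝ × ℝ => h z.1 * g z.2)) :
    (∀ x : ℝ, Integrable (fun y => T (x, y) * theta y) volume) ∧
    (fun x => ∫ y, T (x, y) * theta y) ∈ spanTrans1 h := by
  induction hT using Submodule.span_induction with
  | mem T hTmem =>
    obtain ⟨⟨s, t⟩, rfl⟩ := hTmem
    show (∀ x : ℝ, Integrable (fun y => (h (x - s) * g (y - t)) * theta y) volume) ∧
      (fun x => ∫ y, (h (x - s) * g (y - t)) * theta y) ∈ spanTrans1 h
    have hgt : Integrable (fun y : ℝ => g (y - t)) volume :=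
      memLp_one_iff_integrable.mp
        ((memLp_one_iff_integrable.mpr hg1).comp_measurePreserving
          (measurePreserving_sub_right volume t))
    have h1 : Integrable (fun y : ℝ => g (y - t) * theta y) volume := by
      have := hgt.bdd_mul theta_aesm (Filter.Eventually.of_forall theta_bdd)
      apply this.congr
      filter_upwards with y
      ring
    have hint : ∀ x : ℝ, Integrable (fun y => (h (x - s) * g (y - t)) * theta y) volume := by
      intro x
      apply (h1.const_mul (h (x - s))).congr
      filter_upwards with y
      ring
    refine ⟨hint, ?_⟩
    have heq : (fun x => ∫ y, (h (x - s) * g (y - t)) * theta y)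
        = (∫ y, g (y - t) * theta y) • (fun x => h (x - s)) := by
      funext x
      simp only [Pi.smul_apply, smul_eq_mul]
      rw [show (fun y => (h (x - s) * g (y - t)) * theta y)
          = fun y => h (x - s) * (g (y - t) * theta y) by funext y; ring]
      rw [integral_const_mul]
      ring
    rw [heq]
    exact Submodule.smul_mem _ _ (Submodule.subset_span ⟨s, rfl⟩)
  | zero =>
    constructor
    · intro x
      simp only [Pi.zero_apply, zero_mul]
      exact integrable_zero _ _ _
    · have : (fun x : ℝ => ∫ y, (0 : ℝ × ℝ → ℂ) (x, y) * theta y) = (0 : ℝ → ℂ) := by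
        funext x; simp
      rw [this]
      exact Submodule.zero_mem _
  | add T₁ T₂ _ _ ih1 ih2 =>
    obtain ⟨hint1, hmem1⟩ := ih1
    obtain ⟨hint2, hmem2⟩ := ih2
    constructor
    · intro x
      have := (hint1 x).add (hint2 x)
      apply this.congr
      filter_upwards with y
      simp only [Pi.add_apply]
      ring
    · have : (fun x => ∫ y, (T₁ + T₂) (x, y) * theta y)
          = (fun x => ∫ y, T₁ (x, y) * theta y) + (fun x => ∫ y, T₂ (x, y) * theta y) := by
        funext x
        simp only [Pi.add_apply]
        rw [← integral_add (hint1 x) (hint2 x)]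
        congr 1
        funext y
        ring
      rw [this]
      exact Submodule.add_mem _ hmem1 hmem2
  | smul c T₁ _ ih1 =>
    obtain ⟨hint1, hmem1⟩ := ih1
    constructor
    · intro x
      apply ((hint1 x).const_mul c).congr
      filter_upwards with y
      simp only [Pi.smul_apply, smul_eq_mul]
      ring
    · have : (fun x => ∫ y, (c • T₁) (x, y) * theta y)
          = c • (fun x => ∫ y, T₁ (x, y) * theta y) := by
        funext x
        simp only [Pi.smul_apply, smul_eq_mul]
        rw [← integral_const_mul]
        congr 1
        funext y
        ring
      rw [this]
      exact Submodule.smul_mem _ _ hmem1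

/-- integrating the first variable of a span element against theta -/
theorem span2_integral_mem_fst (h g : ℝ → ℂ) (hh1 : Integrable h volume)
    {T : ℝ × ℝ → ℂ} (hT : T ∈ spanTrans2 (fun z : ℝ × ℝ => h z.1 * g z.2)) :
    (∀ y : ℝ, Integrable (fun x => T (x, y) * theta x) volume) ∧
    (fun y => ∫ x, T (x, y) * theta x) ∈ spanTrans1 g := by
  induction hT using Submodule.span_induction with
  | mem T hTmem =>
    obtain ⟨⟨s, t⟩, rfl⟩ := hTmem
    show (∀ y : ℝ, Integrable (fun x => (h (x - s) * g (y - t)) * theta x) volume) ∧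
      (fun y => ∫ x, (h (x - s) * g (y - t)) * theta x) ∈ spanTrans1 g
    have hhs : Integrable (fun x : ℝ => h (x - s)) volume :=
      memLp_one_iff_integrable.mp
        ((memLp_one_iff_integrable.mpr hh1).comp_measurePreserving
          (measurePreserving_sub_right volume s))
    have h1 : Integrable (fun x : ℝ => h (x - s) * theta x) volume := by
      have := hhs.bdd_mul theta_aesm (Filter.Eventually.of_forall theta_bdd)
      apply this.congr
      filter_upwards with x
      ring
    have hint : ∀ y : ℝ, Integrable (fun x => (h (x - s) * g (y - t)) * theta x) volume := by
      intro y
      apply (h1.const_mul (g (y - t))).congr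
      filter_upwards with x
      ring
    refine ⟨hint, ?_⟩
    have heq : (fun y => ∫ x, (h (x - s) * g (y - t)) * theta x)
        = (∫ x, h (x - s) * theta x) • (fun y => g (y - t)) := by
      funext y
      simp only [Pi.smul_apply, smul_eq_mul]
      rw [show (fun x => (h (x - s) * g (y - t)) * theta x)
          = fun x => g (y - t) * (h (x - s) * theta x) by funext x; ring]
      rw [integral_const_mul]
      ring
    rw [heq]
    exact Submodule.smul_mem _ _ (Submodule.subset_span ⟨t, rfl⟩)
  | zero =>
    constructor
    · intro y
      simp only [Pi.zero_apply, zero_mul]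
      exact integrable_zero _ _ _
    · have : (fun y : ℝ => ∫ x, (0 : ℝ × ℝ → ℂ) (x, y) * theta x) = (0 : ℝ → ℂ) := by
        funext y; simp
      rw [this]
      exact Submodule.zero_mem _
  | add T₁ T₂ _ _ ih1 ih2 =>
    obtain ⟨hint1, hmem1⟩ := ih1
    obtain ⟨hint2, hmem2⟩ := ih2
    constructor
    · intro y
      apply ((hint1 y).add (hint2 y)).congr
      filter_upwards with x
      simp only [Pi.add_apply]
      ring
    · have : (fun y => ∫ x, (T₁ + T₂) (x, y) * theta x)
          = (fun y => ∫ x, T₁ (x, y) * theta x) + (fun y => ∫ x, T₂ (x, y) * theta x) := by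
        funext y
        simp only [Pi.add_apply]
        rw [← integral_add (hint1 y) (hint2 y)]
        congr 1
        funext x
        ring
      rw [this]
      exact Submodule.add_mem _ hmem1 hmem2
  | smul c T₁ _ ih1 =>
    obtain ⟨hint1, hmem1⟩ := ih1
    constructor
    · intro y
      apply ((hint1 y).const_mul c).congr
      filter_upwards with x
      simp only [Pi.smul_apply, smul_eq_mul]
      ring
    · have : (fun y => ∫ x, (c • T₁) (x, y) * theta x)
          = c • (fun y => ∫ x, T₁ (x, y) * theta x) := by
        funext y
        simp only [Pi.smul_apply, smul_eq_mul]
        rw [← integral_const_mul]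
        congr 1
        funext x
        ring
      rw [this]
      exact Submodule.smul_mem _ _ hmem1

theorem theta_mul_self : ∀ y, theta y * theta y = theta y := by
  intro y
  rw [theta]
  by_cases hy : y ∈ Set.Icc (0:ℝ) 1
  · rw [Set.indicator_of_mem hy]; simp
  · rw [Set.indicator_of_notMem hy]; simp

theorem theta_integral : ∫ y, theta y = 1 := by
  rw [theta, MeasureTheory.integral_indicator_const (1:ℂ) measurableSet_Icc]
  rw [Real.volume_real_Icc]
  norm_num

theorem theta_eLpNorm (r : ℝ) (hr : 0 < r) :
    eLpNorm theta (ENNReal.ofReal r) volume = 1 := by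
  have hne : ENNReal.ofReal r ≠ 0 := by simp [ENNReal.ofReal_eq_zero, not_le, hr]
  rw [theta, eLpNorm_indicator_const measurableSet_Icc hne ENNReal.ofReal_ne_top]
  rw [Real.volume_Icc]
  norm_num

/-! ### Forward direction -/

theorem forward_h {p : ℝ} (hp : 1 < p) {h g : ℝ → ℂ}
    (hg1 : Integrable g volume)
    (hhp : MemLp h (ENNReal.ofReal p) volume) (hgp : MemLp g (ENNReal.ofReal p) volume)
    (H2 : pReg2 (ENNReal.ofReal p) (fun z : ℝ × ℝ => h z.1 * g z.2)) :
    pReg1 (ENNReal.ofReal p) h := by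
  set pe := ENNReal.ofReal p with hpe_def
  have hp0 : (0:ℝ) < p := lt_trans one_pos hp
  have hpq : p.HolderConjugate (p / (p - 1)) := Real.HolderConjugate.conjExponent hp
  set q : ℝ := p / (p - 1) with hq_def
  have hq0 : 0 < q := hpq.symm.pos
  intro u hu ε hε
  have hθp : MemLp theta pe volume := memℒp_Icc_indicator pe 0 1
  have hθq : MemLp theta (ENNReal.ofReal q) volume := memℒp_Icc_indicator _ 0 1
  set U : ℝ × ℝ → ℂ := fun z => u z.1 * theta z.2 with hU_def
  have hUmem : MemLp U pe volume := tensor_memℒp hp0 hu hθp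
  obtain ⟨T, hTmem, hT⟩ := H2 U hUmem (ε/2) (by linarith)
  obtain ⟨hTint, hΦmem⟩ := span2_integral_mem h g hg1 hTmem
  have hfmem : MemLp (fun z : ℝ × ℝ => h z.1 * g z.2) pe volume := tensor_memℒp hp0 hhp hgp
  have hTℒp : MemLp T pe volume := spanTrans2_memℒp hfmem hTmem
  have hUint : ∀ x : ℝ, Integrable (fun y => U (x, y) * theta y) volume := by
    intro x
    apply (theta_int.const_mul (u x)).congr
    filter_upwards with y
    simp only [hU_def]
    rw [mul_assoc, theta_mul_self]
  refine ⟨_, hΦmem, ?_⟩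
  have hkey : u - (fun x => ∫ y, T (x, y) * theta y)
      = fun x => ∫ y, (U - T) (x, y) * theta y := by
    funext x
    simp only [Pi.sub_apply]
    rw [show (fun y => (U (x, y) - T (x, y)) * theta y)
        = fun y => U (x, y) * theta y - T (x, y) * theta y by funext y; ring]
    rw [integral_sub (hUint x) (hTint x)]
    have : ∫ y, U (x, y) * theta y = u x := by
      rw [show (fun y => U (x, y) * theta y) = fun y => u x * theta y by
        funext y; simp only [hU_def]; rw [mul_assoc, theta_mul_self]]
      rw [integral_const_mul, theta_integral, mul_one]
    rw [this]
  rw [hkey]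
  have hDaesm : AEStronglyMeasurable (U - T) ((volume : Measure ℝ).prod volume) := by
    rw [← Measure.volume_eq_prod]
    exact (hUmem.sub hTℒp).aestronglyMeasurable
  calc eLpNorm (fun x => ∫ y, (U - T) (x, y) * theta y) pe volume
      ≤ eLpNorm (U - T) pe ((volume : Measure ℝ).prod volume)
        * eLpNorm theta (ENNReal.ofReal q) volume :=
        section_estimate volume volume hpq hDaesm hθq
    _ = eLpNorm (U - T) pe volume := by
        rw [theta_eLpNorm q hq0, mul_one, ← Measure.volume_eq_prod]
    _ < ENNReal.ofReal (ε/2) := hT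
    _ ≤ ENNReal.ofReal ε := ENNReal.ofReal_le_ofReal (by linarith)

theorem forward_g {p : ℝ} (hp : 1 < p) {h g : ℝ → ℂ}
    (hh1 : Integrable h volume)
    (hhp : MemLp h (ENNReal.ofReal p) volume) (hgp : MemLp g (ENNReal.ofReal p) volume)
    (H2 : pReg2 (ENNReal.ofReal p) (fun z : ℝ × ℝ => h z.1 * g z.2)) :
    pReg1 (ENNReal.ofReal p) g := by
  set pe := ENNReal.ofReal p with hpe_def
  have hp0 : (0:ℝ) < p := lt_trans one_pos hp
  have hpq : p.HolderConjugate (p / (p - 1)) := Real.HolderConjugate.conjExponent hp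
  set q : ℝ := p / (p - 1) with hq_def
  have hq0 : 0 < q := hpq.symm.pos
  intro u hu ε hε
  have hθp : MemLp theta pe volume := memℒp_Icc_indicator pe 0 1
  have hθq : MemLp theta (ENNReal.ofReal q) volume := memℒp_Icc_indicator _ 0 1
  set U : ℝ × ℝ → ℂ := fun z => theta z.1 * u z.2 with hU_def
  have hUmem : MemLp U pe volume := tensor_memℒp hp0 hθp hu
  obtain ⟨T, hTmem, hT⟩ := H2 U hUmem (ε/2) (by linarith)
  obtain ⟨hTint, hΦmem⟩ := span2_integral_mem_fst h g hh1 hTmem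
  have hfmem : MemLp (fun z : ℝ × ℝ => h z.1 * g z.2) pe volume := tensor_memℒp hp0 hhp hgp
  have hTℒp : MemLp T pe volume := spanTrans2_memℒp hfmem hTmem
  have hUint : ∀ y : ℝ, Integrable (fun x => U (x, y) * theta x) volume := by
    intro y
    apply (theta_int.const_mul (u y)).congr
    filter_upwards with x
    simp only [hU_def]
    rw [show theta x * u y * theta x = u y * (theta x * theta x) by ring, theta_mul_self]
  refine ⟨_, hΦmem, ?_⟩
  have hkey : u - (fun y => ∫ x, T (x, y) * theta x)
      = fun y => ∫ x, (U - T) (x, y) * theta x := by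
    funext y
    simp only [Pi.sub_apply]
    rw [show (fun x => (U (x, y) - T (x, y)) * theta x)
        = fun x => U (x, y) * theta x - T (x, y) * theta x by funext x; ring]
    rw [integral_sub (hUint y) (hTint y)]
    have : ∫ x, U (x, y) * theta x = u y := by
      rw [show (fun x => U (x, y) * theta x) = fun x => u y * (theta x * theta x) by
        funext x; simp only [hU_def]; ring]
      simp_rw [theta_mul_self]
      rw [integral_const_mul, theta_integral, mul_one]
    rw [this]
  rw [hkey]
  -- swap coordinates
  set D' : ℝ × ℝ → ℂ := fun w => (U - T) (w.2, w.1) with hD'_def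
  have hDaesm : AEStronglyMeasurable (U - T) ((volume : Measure ℝ).prod volume) := by
    rw [← Measure.volume_eq_prod]
    exact (hUmem.sub hTℒp).aestronglyMeasurable
  have hD'aesm : AEStronglyMeasurable D' ((volume : Measure ℝ).prod volume) :=
    hDaesm.prod_swap
  have hD'norm : eLpNorm D' pe ((volume : Measure ℝ).prod volume)
      = eLpNorm (U - T) pe ((volume : Measure ℝ).prod volume) := by
    have : D' = (U - T) ∘ Prod.swap := rfl
    rw [this]
    exact eLpNorm_comp_measurePreserving hDaesm Measure.measurePreserving_swap
  calc eLpNorm (fun y => ∫ x, (U - T) (x, y) * theta x) pe volume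
      = eLpNorm (fun a => ∫ b, D' (a, b) * theta b) pe volume := rfl
    _ ≤ eLpNorm D' pe ((volume : Measure ℝ).prod volume)
        * eLpNorm theta (ENNReal.ofReal q) volume :=
        section_estimate volume volume hpq hD'aesm hθq
    _ = eLpNorm (U - T) pe volume := by
        rw [theta_eLpNorm q hq0, mul_one, hD'norm, ← Measure.volume_eq_prod]
    _ < ENNReal.ofReal (ε/2) := hT
    _ ≤ ENNReal.ofReal ε := ENNReal.ofReal_le_ofReal (by linarith)

/-- for `1 < p < ∞` and `h, g ∈ L¹(ℝ) ∩ L^p(ℝ)`, the product function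
`f(q,p) = h(q)g(p)` lies in `L¹(ℝ²) ∩ L^p(ℝ²)`, and the span of its translates is dense
in `L^p(ℝ²)` iff the spans of the translates of `h` and of `g` are both dense in
`L^p(ℝ)`. -/
theorem product_function_pRegular
    (p : ℝ) (hp : 1 < p) (h g : ℝ → ℂ)
    (hh1 : Integrable h volume) (hhp : MemLp h (ENNReal.ofReal p) volume)
    (hg1 : Integrable g volume) (hgp : MemLp g (ENNReal.ofReal p) volume) :
    Integrable (fun z : ℝ × ℝ => h z.1 * g z.2) volume ∧
    MemLp (fun z : ℝ × ℝ => h z.1 * g z.2) (ENNReal.ofReal p) volume ∧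
    (pReg2 (ENNReal.ofReal p) (fun z : ℝ × ℝ => h z.1 * g z.2) ↔
      (pReg1 (ENNReal.ofReal p) h ∧ pReg1 (ENNReal.ofReal p) g)) := by
  have hp0 : (0:ℝ) < p := lt_trans one_pos hp
  refine ⟨?_, tensor_memℒp hp0 hhp hgp, ?_⟩
  · rw [Measure.volume_eq_prod]
    exact hh1.mul_prod hg1
  · constructor
    · intro H2
      exact ⟨forward_h hp hg1 hhp hgp H2, forward_g hp hh1 hhp hgp H2⟩
    · rintro ⟨Hh, Hg⟩
      exact backward_pReg2 hp hhp hgp Hh Hg
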